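/- In the abstract setting described in the context, there exist r₀ > 0 and ε₁ ∈ (0, ε₀] such that for every ε ∈ (0, ε₁] there exists exactly one u_ε ∈ U with ‖u_ε − ū_ε‖_U ≤ r₀ and A_ε u_ε + D F(ι u_ε) = 0. -/

import Mathlib

open Filter Set Metric Function

/-- Theorem 3.3 of the paper, existence and local uniqueness, abstract
setting. There exist `r₀ > 0` and `ε₁ ∈ (0, ε₀]` such that for every `ε ∈ (0, ε₁]` there
is exactly one `u_ε ∈ U` with `‖u_ε - ū_ε‖ ≤ r₀` and `A_ε u_ε + D F(ι u_ε) = 0`. -/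
theorem abstract_existence_local_uniqueness
    {U X Y V : Type*}
    [NormedAddCommGroup U] [NormedSpace ℝ U] [CompleteSpace U]
    [NormedAddCommGroup X] [NormedSpace ℝ X] [CompleteSpace X]
    [NormedAddCommGroup Y] [NormedSpace ℝ Y] [CompleteSpace Y]
    [NormedAddCommGroup V] [NormedSpace ℝ V] [CompleteSpace V]
    (ι : U →L[ℝ] X) (hι : Function.Injective ι)
    (D : Y →L[ℝ] V)
    (F : X → Y) (F' : X → (X →L[ℝ] Y))
    (hF : ∀ x, HasFDerivAt F (F' x) x) (hF' : Continuous F')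
    (u₀ : X) (ε₀ : ℝ) (hε₀ : 0 < ε₀)
    (A : ℝ → (U →L[ℝ] V)) (Tinv : ℝ → (V →L[ℝ] U))
    -- `T_ε := A_ε + D ∘ F'(u₀) ∘ ι` is bijective with inverse `Tinv ε` ...
    (hT : ∀ ε ∈ Ioc (0:ℝ) ε₀, ∀ u : U,
      Tinv ε ((A ε + D.comp ((F' u₀).comp ι)) u) = u)
    (hT' : ∀ ε ∈ Ioc (0:ℝ) ε₀, ∀ v : V,
      (A ε + D.comp ((F' u₀).comp ι)) (Tinv ε v) = v)
    -- ... uniformly bounded by `M`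
    (M : ℝ) (hM : ∀ ε ∈ Ioc (0:ℝ) ε₀, ‖Tinv ε‖ ≤ M)
    -- the approximate solutions `ū_ε`
    (ubar : ℝ → U)
    (hubar : Tendsto (fun ε => ‖ι (ubar ε) - u₀‖) (nhdsWithin 0 (Ioi 0)) (nhds 0))
    (hdelta : Tendsto (fun ε => ‖A ε (ubar ε) + D (F (ι (ubar ε)))‖)
      (nhdsWithin 0 (Ioi 0)) (nhds 0))
    -- the fixed point maps `G_ε`
    (G : ℝ → U → U)
    (hG : ∀ ε, ∀ u : U, G ε u = Tinv ε (D (F' u₀ (ι u) - F (ι u))))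
    :
    ∃ r₀ > (0:ℝ), ∃ ε₁ ∈ Ioc (0:ℝ) ε₀, ∀ ε ∈ Ioc (0:ℝ) ε₁,
      ∃! u : U, ‖u - ubar ε‖ ≤ r₀ ∧ A ε u + D (F (ι u)) = 0 := by
  have hM0 : 0 ≤ M := le_trans (norm_nonneg _) (hM ε₀ ⟨hε₀, le_refl _⟩)
  set K : ℝ := M * ‖D‖ with hKdef
  have hK0 : 0 ≤ K := mul_nonneg hM0 (norm_nonneg _)
  have hden : (0:ℝ) < K * ‖ι‖ + 1 := by positivity
  set κ : ℝ := 1 / (2 * (K * ‖ι‖ + 1)) with hκdef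
  have hκ0 : 0 < κ := by positivity
  have hκK : K * ‖ι‖ * κ ≤ 1/2 := by
    rw [hκdef, mul_one_div, div_le_div_iff₀ (by positivity) (by norm_num)]
    nlinarith [mul_nonneg hK0 (norm_nonneg ι)]
  -- choose ρ from continuity of F' at u₀
  obtain ⟨δ₁, hδ₁0, hδ₁⟩ := Metric.continuousAt_iff.mp (hF'.continuousAt (x := u₀)) κ hκ0
  set ρ : ℝ := δ₁ / 2 with hρdef
  have hρ0 : 0 < ρ := by positivity
  have hρ : ∀ x : X, ‖x - u₀‖ ≤ ρ → ‖F' x - F' u₀‖ ≤ κ := by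
    intro x hx
    have h := hδ₁ (x := x) (by rw [dist_eq_norm]; linarith)
    rw [dist_eq_norm] at h
    linarith
  -- quantitative mean value estimate
  have key : ∀ x ∈ closedBall u₀ ρ, ∀ x' ∈ closedBall u₀ ρ,
      ‖(F' u₀ (x) - F (x)) - (F' u₀ (x') - F (x'))‖ ≤ κ * ‖x - x'‖ := by
    intro x hx x' hx'
    have h := (convex_closedBall u₀ ρ).norm_image_sub_le_of_norm_hasFDerivWithin_le
      (f := fun z => F z - F' u₀ z) (f' := fun z => F' z - F' u₀)
      (fun z _ => ((hF z).sub ((F' u₀).hasFDerivAt)).hasFDerivWithinAt)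
      (fun z hz => hρ z (by rwa [mem_closedBall, dist_eq_norm] at hz))
      hx' hx
    calc ‖(F' u₀ x - F x) - (F' u₀ x' - F x')‖
        = ‖(F x - F' u₀ x) - (F x' - F' u₀ x')‖ := by
          rw [← norm_neg]; congr 1; abel
      _ ≤ κ * ‖x - x'‖ := h
  set r₀ : ℝ := ρ / (2 * (‖ι‖ + 1)) with hr₀def
  have hr₀0 : 0 < r₀ := by positivity
  have hιr₀ : ‖ι‖ * r₀ ≤ ρ / 2 := by
    rw [hr₀def, ← mul_div_assoc, div_le_div_iff₀ (by positivity) (by norm_num)]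
    nlinarith [norm_nonneg ι, hρ0]
  -- choose ε₁
  have hev : ∀ᶠ ε in nhdsWithin 0 (Ioi 0),
      ‖ι (ubar ε) - u₀‖ ≤ ρ/2 ∧ M * ‖A ε (ubar ε) + D (F (ι (ubar ε)))‖ ≤ r₀/2 := by
    have h1 : ∀ᶠ ε in nhdsWithin 0 (Ioi 0), ‖ι (ubar ε) - u₀‖ < ρ/2 :=
      hubar.eventually_lt_const (by positivity)
    have h2' : Tendsto (fun ε => M * ‖A ε (ubar ε) + D (F (ι (ubar ε)))‖)
        (nhdsWithin 0 (Ioi 0)) (nhds 0) := by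
      simpa using hdelta.const_mul M
    have h2 : ∀ᶠ ε in nhdsWithin 0 (Ioi 0),
        M * ‖A ε (ubar ε) + D (F (ι (ubar ε)))‖ < r₀/2 :=
      h2'.eventually_lt_const (by positivity)
    filter_upwards [h1, h2] with ε hε1 hε2
    exact ⟨hε1.le, hε2.le⟩
  obtain ⟨a, ha0, ha⟩ := Metric.mem_nhdsWithin_iff.mp hev
  refine ⟨r₀, hr₀0, min (a/2) ε₀, ⟨lt_min (by positivity) hε₀, min_le_right _ _⟩, ?_⟩
  intro ε hε
  have hεε₀ : ε ∈ Ioc 0 ε₀ := ⟨hε.1, hε.2.trans (min_le_right _ _)⟩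
  have hεS : ‖ι (ubar ε) - u₀‖ ≤ ρ/2 ∧ M * ‖A ε (ubar ε) + D (F (ι (ubar ε)))‖ ≤ r₀/2 := by
    refine ha ⟨?_, hε.1⟩
    rw [mem_ball, dist_zero_right, Real.norm_eq_abs, abs_of_pos hε.1]
    have := hε.2.trans (min_le_left _ _)
    linarith
  -- fixed point characterization
  have hfix : ∀ u : U, (A ε u + D (F (ι u)) = 0) ↔ G ε u = u := by
    intro u
    rw [hG]
    constructor
    · intro h
      have hDu : D (F' u₀ (ι u) - F (ι u)) = (A ε + D.comp ((F' u₀).comp ι)) u := by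
        simp only [ContinuousLinearMap.add_apply, ContinuousLinearMap.coe_comp',
          Function.comp_apply, map_sub]
        have : D (F' u₀ (ι u)) - D (F (ι u)) =
            (A ε u + D (F' u₀ (ι u))) - (A ε u + D (F (ι u))) := by abel
        rw [this, h, sub_zero]
      rw [hDu, hT ε hεε₀]
    · intro h
      have h2 : D (F' u₀ (ι u) - F (ι u)) = (A ε + D.comp ((F' u₀).comp ι)) u := by
        have h2' := hT' ε hεε₀ (D (F' u₀ (ι u) - F (ι u)))
        rw [h] at h2'
        exact h2'.symm
      simp only [ContinuousLinearMap.add_apply, ContinuousLinearMap.coe_comp',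
        Function.comp_apply, map_sub] at h2
      have h3 : A ε u + D (F (ι u)) =
          (A ε u + D (F' u₀ (ι u))) - (D (F' u₀ (ι u)) - D (F (ι u))) := by abel
      rw [h3, h2, sub_self]
  have hball : ∀ u ∈ closedBall (ubar ε) r₀, ι u ∈ closedBall u₀ ρ := by
    intro u hu
    rw [mem_closedBall, dist_eq_norm] at hu ⊢
    calc ‖ι u - u₀‖ = ‖ι (u - ubar ε) + (ι (ubar ε) - u₀)‖ := by
          congr 1; rw [map_sub]; abel
      _ ≤ ‖ι (u - ubar ε)‖ + ‖ι (ubar ε) - u₀‖ := norm_add_le _ _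
      _ ≤ ‖ι‖ * r₀ + ρ/2 := add_le_add
          (le_trans (ι.le_opNorm _) (mul_le_mul_of_nonneg_left hu (norm_nonneg _))) hεS.1
      _ ≤ ρ/2 + ρ/2 := by linarith
      _ = ρ := by ring
  have hGlip : ∀ u u' : U, ι u ∈ closedBall u₀ ρ → ι u' ∈ closedBall u₀ ρ →
      ‖G ε u - G ε u'‖ ≤ (1/2) * ‖u - u'‖ := by
    intro u u' hu hu'
    rw [hG, hG, ← map_sub (Tinv ε), ← map_sub D]
    calc ‖Tinv ε (D ((F' u₀ (ι u) - F (ι u)) - (F' u₀ (ι u') - F (ι u'))))‖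
        ≤ M * ‖D ((F' u₀ (ι u) - F (ι u)) - (F' u₀ (ι u') - F (ι u')))‖ :=
          le_trans ((Tinv ε).le_opNorm _)
            (mul_le_mul_of_nonneg_right (hM ε hεε₀) (norm_nonneg _))
      _ ≤ M * (‖D‖ * ‖(F' u₀ (ι u) - F (ι u)) - (F' u₀ (ι u') - F (ι u'))‖) :=
          mul_le_mul_of_nonneg_left (D.le_opNorm _) hM0
      _ ≤ M * (‖D‖ * (κ * ‖ι u - ι u'‖)) :=
          mul_le_mul_of_nonneg_left
            (mul_le_mul_of_nonneg_left (key _ hu _ hu') (norm_nonneg _)) hM0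
      _ = K * κ * ‖ι u - ι u'‖ := by rw [hKdef]; ring
      _ ≤ K * κ * (‖ι‖ * ‖u - u'‖) := by
          refine mul_le_mul_of_nonneg_left ?_ (by positivity)
          rw [← map_sub]; exact ι.le_opNorm _
      _ = (K * ‖ι‖ * κ) * ‖u - u'‖ := by ring
      _ ≤ (1/2) * ‖u - u'‖ := mul_le_mul_of_nonneg_right hκK (norm_nonneg _)
  have hGbar : ‖G ε (ubar ε) - ubar ε‖ ≤ r₀/2 := by
    have h1 : G ε (ubar ε) - ubar ε = Tinv ε (-(A ε (ubar ε) + D (F (ι (ubar ε))))) := by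
      rw [hG]
      calc Tinv ε (D (F' u₀ (ι (ubar ε)) - F (ι (ubar ε)))) - ubar ε
          = Tinv ε (D (F' u₀ (ι (ubar ε)) - F (ι (ubar ε))))
            - Tinv ε ((A ε + D.comp ((F' u₀).comp ι)) (ubar ε)) := by
            rw [hT ε hεε₀]
        _ = Tinv ε (D (F' u₀ (ι (ubar ε)) - F (ι (ubar ε)))
            - (A ε + D.comp ((F' u₀).comp ι)) (ubar ε)) := (map_sub (Tinv ε) _ _).symm
        _ = Tinv ε (-(A ε (ubar ε) + D (F (ι (ubar ε))))) := by
            congr 1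
            simp only [ContinuousLinearMap.add_apply, ContinuousLinearMap.coe_comp',
              Function.comp_apply, map_sub]
            abel
    rw [h1]
    calc ‖Tinv ε (-(A ε (ubar ε) + D (F (ι (ubar ε)))))‖
        ≤ M * ‖-(A ε (ubar ε) + D (F (ι (ubar ε))))‖ :=
          le_trans ((Tinv ε).le_opNorm _)
            (mul_le_mul_of_nonneg_right (hM ε hεε₀) (norm_nonneg _))
      _ = M * ‖A ε (ubar ε) + D (F (ι (ubar ε)))‖ := by rw [norm_neg]
      _ ≤ r₀/2 := hεS.2
  have hmaps : ∀ u ∈ closedBall (ubar ε) r₀, G ε u ∈ closedBall (ubar ε) r₀ := by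
    intro u hu
    have hu' : ‖u - ubar ε‖ ≤ r₀ := by rwa [mem_closedBall, dist_eq_norm] at hu
    rw [mem_closedBall, dist_eq_norm]
    calc ‖G ε u - ubar ε‖
        ≤ ‖G ε u - G ε (ubar ε)‖ + ‖G ε (ubar ε) - ubar ε‖ :=
          norm_sub_le_norm_sub_add_norm_sub _ _ _
      _ ≤ (1/2) * ‖u - ubar ε‖ + r₀/2 := add_le_add
          (hGlip u (ubar ε) (hball u hu) (hball (ubar ε) (mem_closedBall_self hr₀0.le))) hGbar
      _ ≤ (1/2) * r₀ + r₀/2 := by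
          have := mul_le_mul_of_nonneg_left hu' (by norm_num : (0:ℝ) ≤ 1/2)
          linarith
      _ = r₀ := by ring
  -- Banach fixed point on the closed ball
  haveI : Nonempty (closedBall (ubar ε) r₀) := ⟨⟨ubar ε, mem_closedBall_self hr₀0.le⟩⟩
  haveI : CompleteSpace (closedBall (ubar ε) r₀) :=
    (isClosed_closedBall).completeSpace_coe
  set f : closedBall (ubar ε) r₀ → closedBall (ubar ε) r₀ :=
    fun u => ⟨G ε u.1, hmaps u.1 u.2⟩ with hfdef
  have hcontr : ContractingWith (1/2 : NNReal) f := by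
    constructor
    · rw [← NNReal.coe_lt_coe]; norm_num
    · apply LipschitzWith.of_dist_le_mul
      intro x y
      simp only [Subtype.dist_eq, dist_eq_norm]
      have := hGlip x.1 y.1 (hball x.1 x.2) (hball y.1 y.2)
      calc ‖G ε x.1 - G ε y.1‖ ≤ (1/2) * ‖x.1 - y.1‖ := this
        _ = ((1/2 : NNReal) : ℝ) * ‖x.1 - y.1‖ := by norm_num
  refine ⟨(ContractingWith.fixedPoint f hcontr).1, ⟨?_, ?_⟩, ?_⟩
  · have h := (ContractingWith.fixedPoint f hcontr).2
    rwa [mem_closedBall, dist_eq_norm] at h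
  · rw [hfix]
    have h := hcontr.fixedPoint_isFixedPt
    exact congrArg Subtype.val h
  · rintro u' ⟨hu'1, hu'2⟩
    have hu's : u' ∈ closedBall (ubar ε) r₀ := by
      rw [mem_closedBall, dist_eq_norm]; exact hu'1
    have hfp : IsFixedPt f ⟨u', hu's⟩ := Subtype.ext ((hfix u').mp hu'2)
    exact congrArg Subtype.val (hcontr.fixedPoint_unique hfp)
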